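/- Let f : B^n → R^d be a vector Mk Landscape with co-occurrence graph G on the n variables (two variables are adjacent iff they appear together in some subfunction mask). If v ∈ B^n is a move such that the induced subgraph G[v] on the support of v is disconnected, then v can be written as v = v1 ∨ v2 with v1, v2 nonempty, disjoint, and with no edge of G between v1 and v2, so that S_v(x) = S_{v1}(x) + S_{v2}(x) for all x. -/

import Mathlib

def bxor4 {n : ℕ} (x v : Fin n → Bool) : Fin n → Bool := fun i => xor (x i) (v i)
def band4 {n : ℕ} (x w : Fin n → Bool) : Fin n → Bool := fun i => x i && w i
def bor4 {n : ℕ} (x w : Fin n → Bool) : Fin n → Bool := fun i => x i || w i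
def bzero4 (n : ℕ) : Fin n → Bool := fun _ => false

theorem disconnected_support_score_decomposition {n d : ℕ}
    (m : Fin d → ℕ)
    (g : ∀ i : Fin d, Fin (m i) → (Fin n → Bool) → ℝ)
    (w : ∀ i : Fin d, Fin (m i) → (Fin n → Bool))
    (f : Fin d → (Fin n → Bool) → ℝ)
    (hf : ∀ i x, f i x = ∑ l, g i l x)
    (hdep : ∀ i l, ∀ x y : Fin n → Bool, band4 x (w i l) = band4 y (w i l) → g i l x = g i l y)
    -- the co-occurrence graph
    (G : SimpleGraph (Fin n))
    (hG : ∀ a b, G.Adj a b ↔ a ≠ b ∧ ∃ i l, w i l a = true ∧ w i l b = true)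
    (v : Fin n → Bool)
    (hne : ({j | v j = true} : Set (Fin n)).Nonempty)
    -- the induced subgraph on the support of v is disconnected
    (hdis : ¬ (G.induce {j | v j = true}).Connected) :
    ∃ v1 v2 : Fin n → Bool,
      v = bor4 v1 v2 ∧
      band4 v1 v2 = bzero4 n ∧
      ({j | v1 j = true} : Set (Fin n)).Nonempty ∧
      ({j | v2 j = true} : Set (Fin n)).Nonempty ∧
      (∀ a b : Fin n, v1 a = true → v2 b = true → ¬ G.Adj a b) ∧
      (∀ (x : Fin n → Bool) (i : Fin d),
        f i (bxor4 x v) - f i x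
          = (f i (bxor4 x v1) - f i x) + (f i (bxor4 x v2) - f i x)) := by
  classical
  set S : Set (Fin n) := {j | v j = true} with hS
  obtain ⟨j0, hj0⟩ := hne
  have hNE : Nonempty S := ⟨⟨j0, hj0⟩⟩
  rw [SimpleGraph.connected_iff] at hdis
  push_neg at hdis
  have hpre : ¬ (G.induce S).Preconnected := fun h => (hdis h).false hNE.some
  unfold SimpleGraph.Preconnected at hpre
  push_neg at hpre
  obtain ⟨a, b, hab⟩ := hpre
  set v1 : Fin n → Bool := fun j =>
    if _ : ∃ hj : v j = true, (G.induce S).Reachable a ⟨j, hj⟩ then true else false with hv1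
  set v2 : Fin n → Bool := fun j => v j && !(v1 j) with hv2
  have hv1_iff : ∀ j, v1 j = true ↔ ∃ hj : v j = true, (G.induce S).Reachable a ⟨j, hj⟩ := by
    intro j; simp [hv1]
  have hv1v : ∀ j, v1 j = true → v j = true := by
    intro j h; obtain ⟨hj, _⟩ := (hv1_iff j).1 h; exact hj
  have hv2_iff : ∀ j, v2 j = true ↔ v j = true ∧ v1 j = false := by
    intro j; simp [hv2]
  have hv2v : ∀ j, v2 j = true → v j = true := fun j h => ((hv2_iff j).1 h).1
  -- disjoint
  have hdisj : band4 v1 v2 = bzero4 n := by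
    funext j
    simp only [band4, bzero4, hv2]
    cases v1 j <;> simp
  -- union
  have hor : v = bor4 v1 v2 := by
    funext j
    simp only [bor4, hv2]
    cases hvj : v j
    · cases hv1j : v1 j
      · simp
      · exact absurd (hv1v j hv1j) (by simp [hvj])
    · cases v1 j <;> simp
  -- v1 nonempty
  have hne1 : ({j | v1 j = true} : Set (Fin n)).Nonempty := by
    refine ⟨a.1, ?_⟩
    have : v1 a.1 = true := by
      rw [hv1_iff]
      exact ⟨a.2, by rw [Subtype.eta]⟩
    exact this
  -- v2 nonempty
  have hne2 : ({j | v2 j = true} : Set (Fin n)).Nonempty := by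
    refine ⟨b.1, ?_⟩
    have hb1 : v1 b.1 = false := by
      by_contra h
      have h' : v1 b.1 = true := by simpa using h
      obtain ⟨hj, hr⟩ := (hv1_iff b.1).1 h'
      exact hab (by rwa [Subtype.eta] at hr)
    show v2 b.1 = true
    rw [hv2_iff]
    exact ⟨b.2, hb1⟩
  -- no edges between v1 and v2
  have hnoedge : ∀ p q : Fin n, v1 p = true → v2 q = true → ¬ G.Adj p q := by
    intro p q hp hq hadj
    obtain ⟨hpv, hr⟩ := (hv1_iff p).1 hp
    obtain ⟨hqv, hq1⟩ := (hv2_iff q).1 hq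
    have hadj' : (G.induce S).Adj ⟨p, hpv⟩ ⟨q, hqv⟩ := by
      simpa using hadj
    have : v1 q = true := by
      rw [hv1_iff]
      exact ⟨hqv, hr.trans hadj'.reachable⟩
    rw [this] at hq1; simp at hq1
  refine ⟨v1, v2, hor, hdisj, hne1, hne2, hnoedge, ?_⟩
  intro x i
  simp only [hf]
  rw [← Finset.sum_sub_distrib, ← Finset.sum_sub_distrib, ← Finset.sum_sub_distrib,
    ← Finset.sum_add_distrib]
  apply Finset.sum_congr rfl
  intro l _
  by_cases hc : ∃ j, w i l j = true ∧ v2 j = true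
  · -- the mask avoids the support of v1
    obtain ⟨q, hwq, hq2⟩ := hc
    have hmask1 : ∀ j, w i l j = true → v1 j = false := by
      intro j hwj
      by_contra h
      have hj1 : v1 j = true := by simpa using h
      have hne' : j ≠ q := by
        intro h'; subst h'
        have := (hv2_iff j).1 hq2
        rw [hj1] at this; simp at this
      exact hnoedge j q hj1 hq2 ((hG j q).2 ⟨hne', i, l, hwj, hwq⟩)
    have e1 : g i l (bxor4 x v) = g i l (bxor4 x v2) := by
      apply hdep
      funext j
      simp only [band4, bxor4]
      cases hwj : w i l j
      · simp
      · have hv1j := hmask1 j hwj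
        have : v j = v2 j := by
          rw [congrFun hor j]; simp [bor4, hv1j]
        rw [this]
    have e2 : g i l (bxor4 x v1) = g i l x := by
      apply hdep
      funext j
      simp only [band4, bxor4]
      cases hwj : w i l j
      · simp
      · rw [hmask1 j hwj]; simp
    rw [e1, e2]; ring
  · -- the mask avoids the support of v2
    push_neg at hc
    have hmask2 : ∀ j, w i l j = true → v2 j = false := by
      intro j hwj
      cases h : v2 j
      · rfl
      · exact absurd h (hc j hwj)
    have e1 : g i l (bxor4 x v) = g i l (bxor4 x v1) := by
      apply hdep
      funext j
      simp only [band4, bxor4]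
      cases hwj : w i l j
      · simp
      · have hv2j := hmask2 j hwj
        have : v j = v1 j := by
          rw [congrFun hor j]; simp [bor4, hv2j]
        rw [this]
    have e2 : g i l (bxor4 x v2) = g i l x := by
      apply hdep
      funext j
      simp only [band4, bxor4]
      cases hwj : w i l j
      · simp
      · rw [hmask2 j hwj]; simp
    rw [e1, e2]; ring
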